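/- arXiv:2002.04536 — 3 statements merged into one kernel-verified Lean document; each statement's English description precedes it below -/
import Mathlib

section
/- Let α, β, γ > −1 be real numbers. Define, for integers n ≥ 0 and 0 ≤ k ≤ n: x^{(2)}_{n,k} = (n−k+α+1)(β+k+1)/((2n+α+β+γ+3)(β+γ+2k+2)), x^{(3)}_{n,k} = (n+k+α+β+γ+3)(γ+k+1)/((2n+α+β+γ+3)(β+γ+2k+2)), y^{(2)}_{n,k} = (n+k+β+γ+2)(β+k+1)/((2n+α+β+γ+3)(β+γ+2k+2)), y^{(3)}_{n,k} = (n−k)(γ+k+1)/((2n+α+β+γ+3)(β+γ+2k+2)), s^{(1)}_{n,k} = k(n−k+α+1)/((2n+α+β+γ+2)(β+γ+2k+1)), s^{(2)}_{n,k} = (n+k+α+β+γ+2)(β+γ+k+1)/((2n+α+β+γ+2)(β+γ+2k+1)), r^{(1)}_{n,k} = k(n+k+β+γ+1)/((2n+α+β+γ+2)(β+γ+2k+1)), r^{(2)}_{n,k} = (n−k)(β+γ+k+1)/((2n+α+β+γ+2)(β+γ+2k+1)); and define a^{(1)}_{n,k}, a^{(2)}_{n,k}, a^{(3)}_{n,k},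 b^{(1)}_{n,k}, b^{(2)}_{n,k}, b^{(3)}_{n,k}, c^{(1)}_{n,k}, c^{(2)}_{n,k}, c^{(3)}_{n,k} as in the recurrence coefficients of the triangle polynomials normalized at (0,1). Then for all n ≥ 3 and 1 ≤ k ≤ n−2 the following nine identities hold: s^{(1)}_{n,k}·x^{(2)}_{n,k−1} = a^{(1)}_{n,k}; s^{(1)}_{n,k}·x^{(3)}_{n,k−1} + s^{(2)}_{n,k}·x^{(2)}_{n,k} = a^{(2)}_{n,k}; s^{(2)}_{n,k}·x^{(3)}_{n,k} = a^{(3)}_{n,k}; s^{(1)}_{n,k}·y^{(2)}_{n,k−1} + r^{(1)}_{n,k}·x^{(2)}_{n−1,k−1} = b^{(1)}_{n,k}; s^{(1)}_{n,k}·y^{(3)}_{n,k−1} + s^{(2)}_{n,k}·y^{(2)}_{n,k} + r^{(1)}_{n,k}·x^{(3)}_{n−1,k−1} + r^{(2)}_{n,k}·x^{(2)}_{n−1,k} = b^{(2)}_{n,k}; s^{(2)}_{n,k}·y^{(3)}_{n,k} + r^{(2)}_{n,k}·x^{(3)}_{n−1,k} = b^{(3)}_{n,k}; r^{(1)}_{n,k}·y^{(2)}_{n−1,k−1}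 = c^{(1)}_{n,k}; r^{(1)}_{n,k}·y^{(3)}_{n−1,k−1} + r^{(2)}_{n,k}·y^{(2)}_{n−1,k} = c^{(2)}_{n,k}; r^{(2)}_{n,k}·y^{(3)}_{n−1,k} = c^{(3)}_{n,k}. -/
set_option maxHeartbeats 2000000


/-- The nine entrywise identities of the stochastic block LU factorization
`J₂ = J_L · J_U` of the Jacobi matrix of the QBD process on the triangle
(polynomials normalized at `(0,1)`), where `J_L` has entries `s⁽¹⁾, s⁽²⁾, r⁽¹⁾, r⁽²⁾`
and `J_U` has entries `x⁽²⁾, x⁽³⁾, y⁽²⁾, y⁽³⁾`. -/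
theorem stmt_15 (α β γ : ℝ) (hα : -1 < α) (hβ : -1 < β) (hγ : -1 < γ)
    (a c b D a1 a2 a3 b1 b2 b3 c1 c2 c3 x2 x3 y2 y3 s1 s2 r1 r2 : ℕ → ℕ → ℝ)
    (ha : ∀ n k, a n k = ((n : ℝ) - k + α + 1) * ((n : ℝ) + k + α + β + γ + 2)
      / ((2 * (n : ℝ) + α + β + γ + 2) * (2 * (n : ℝ) + α + β + γ + 3)))
    (hc : ∀ n k, c n k = ((n : ℝ) - k) * ((n : ℝ) + k + β + γ + 1)
      / ((2 * (n : ℝ) + α + β + γ + 1) * (2 * (n : ℝ) + α + β + γ + 2)))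
    (hb : ∀ n k, b n k = -(a n k + c n k))
    (hD : ∀ n k, D n k = (1 / 2) * (1 + (β ^ 2 - γ ^ 2)
      / ((2 * (k : ℝ) + β + γ + 2) * (2 * (k : ℝ) + β + γ))))
    (ha1 : ∀ n k, a1 n k = ((n : ℝ) - k + α + 1) * ((n : ℝ) - k + α + 2)
        * (k : ℝ) * ((k : ℝ) + β)
      / ((2 * (n : ℝ) + α + β + γ + 2) * (2 * (n : ℝ) + α + β + γ + 3)
        * (2 * (k : ℝ) + β + γ) * (2 * (k : ℝ) + β + γ + 1)))
    (ha2 : ∀ n k, a2 n k = D n k * a n k)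
    (ha3 : ∀ n k, a3 n k = ((n : ℝ) + k + α + β + γ + 2) * ((n : ℝ) + k + α + β + γ + 3)
        * ((k : ℝ) + γ + 1) * ((k : ℝ) + β + γ + 1)
      / ((2 * (n : ℝ) + α + β + γ + 2) * (2 * (n : ℝ) + α + β + γ + 3)
        * (2 * (k : ℝ) + β + γ + 1) * (2 * (k : ℝ) + β + γ + 2)))
    (hb1 : ∀ n k, b1 n k = 2 * (k : ℝ) * ((k : ℝ) + β) * ((n : ℝ) - k + α + 1)
        * ((n : ℝ) + k + β + γ + 1)
      / ((2 * (k : ℝ) + β + γ) * (2 * (k : ℝ) + β + γ + 1)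
        * (2 * (n : ℝ) + α + β + γ + 1) * (2 * (n : ℝ) + α + β + γ + 3)))
    (hb2 : ∀ n k, b2 n k = D n k * (1 + b n k))
    (hb3 : ∀ n k, b3 n k = 2 * ((n : ℝ) - k) * ((n : ℝ) + k + α + β + γ + 2)
        * ((k : ℝ) + γ + 1) * ((k : ℝ) + β + γ + 1)
      / ((2 * (n : ℝ) + α + β + γ + 1) * (2 * (n : ℝ) + α + β + γ + 3)
        * (2 * (k : ℝ) + β + γ + 1) * (2 * (k : ℝ) + β + γ + 2)))
    (hc1 : ∀ n k, c1 n k = ((n : ℝ) + k + β + γ) * ((n : ℝ) + k + β + γ + 1)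
        * (k : ℝ) * ((k : ℝ) + β)
      / ((2 * (n : ℝ) + α + β + γ + 1) * (2 * (n : ℝ) + α + β + γ + 2)
        * (2 * (k : ℝ) + β + γ) * (2 * (k : ℝ) + β + γ + 1)))
    (hc2 : ∀ n k, c2 n k = D n k * c n k)
    (hc3 : ∀ n k, c3 n k = ((n : ℝ) - k - 1) * ((n : ℝ) - k)
        * ((k : ℝ) + β + γ + 1) * ((k : ℝ) + γ + 1)
      / ((2 * (n : ℝ) + α + β + γ + 1) * (2 * (n : ℝ) + α + β + γ + 2)
        * (2 * (k : ℝ) + β + γ + 1) * (2 * (k : ℝ) + β + γ + 2)))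
    (hx2 : ∀ n k, x2 n k = ((n : ℝ) - k + α + 1) * (β + (k : ℝ) + 1)
      / ((2 * (n : ℝ) + α + β + γ + 3) * (β + γ + 2 * (k : ℝ) + 2)))
    (hx3 : ∀ n k, x3 n k = ((n : ℝ) + k + α + β + γ + 3) * (γ + (k : ℝ) + 1)
      / ((2 * (n : ℝ) + α + β + γ + 3) * (β + γ + 2 * (k : ℝ) + 2)))
    (hy2 : ∀ n k, y2 n k = ((n : ℝ) + k + β + γ + 2) * (β + (k : ℝ) + 1)
      / ((2 * (n : ℝ) + α + β + γ + 3) * (β + γ + 2 * (k : ℝ) + 2)))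
    (hy3 : ∀ n k, y3 n k = ((n : ℝ) - k) * (γ + (k : ℝ) + 1)
      / ((2 * (n : ℝ) + α + β + γ + 3) * (β + γ + 2 * (k : ℝ) + 2)))
    (hs1 : ∀ n k, s1 n k = (k : ℝ) * ((n : ℝ) - k + α + 1)
      / ((2 * (n : ℝ) + α + β + γ + 2) * (β + γ + 2 * (k : ℝ) + 1)))
    (hs2 : ∀ n k, s2 n k = ((n : ℝ) + k + α + β + γ + 2) * (β + γ + (k : ℝ) + 1)
      / ((2 * (n : ℝ) + α + β + γ + 2) * (β + γ + 2 * (k : ℝ) + 1)))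
    (hr1 : ∀ n k, r1 n k = (k : ℝ) * ((n : ℝ) + k + β + γ + 1)
      / ((2 * (n : ℝ) + α + β + γ + 2) * (β + γ + 2 * (k : ℝ) + 1)))
    (hr2 : ∀ n k, r2 n k = ((n : ℝ) - k) * (β + γ + (k : ℝ) + 1)
      / ((2 * (n : ℝ) + α + β + γ + 2) * (β + γ + 2 * (k : ℝ) + 1))) :
    ∀ n k : ℕ, 3 ≤ n → 1 ≤ k → k ≤ n - 2 →
      s1 n k * x2 n (k - 1) = a1 n k ∧
      s1 n k * x3 n (k - 1) + s2 n k * x2 n k = a2 n k ∧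
      s2 n k * x3 n k = a3 n k ∧
      s1 n k * y2 n (k - 1) + r1 n k * x2 (n - 1) (k - 1) = b1 n k ∧
      s1 n k * y3 n (k - 1) + s2 n k * y2 n k + r1 n k * x3 (n - 1) (k - 1)
        + r2 n k * x2 (n - 1) k = b2 n k ∧
      s2 n k * y3 n k + r2 n k * x3 (n - 1) k = b3 n k ∧
      r1 n k * y2 (n - 1) (k - 1) = c1 n k ∧
      r1 n k * y3 (n - 1) (k - 1) + r2 n k * y2 (n - 1) k = c2 n k ∧
      r2 n k * y3 (n - 1) k = c3 n k := by
  intro n k hn hk hkn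
  have hn3 : (3:ℝ) ≤ (n:ℝ) := by exact_mod_cast hn
  have hk1 : (1:ℝ) ≤ (k:ℝ) := by exact_mod_cast hk
  have hnc : ((n - 1 : ℕ) : ℝ) = (n:ℝ) - 1 := by
    rw [Nat.cast_sub (by omega)]; norm_num
  have hkc : ((k - 1 : ℕ) : ℝ) = (k:ℝ) - 1 := by
    rw [Nat.cast_sub hk]; norm_num
  have d1 : (2 * (n:ℝ) + α + β + γ + 1) ≠ 0 := by nlinarith
  have d2 : (2 * (n:ℝ) + α + β + γ + 2) ≠ 0 := by nlinarith
  have d3 : (2 * (n:ℝ) + α + β + γ + 3) ≠ 0 := by nlinarith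
  have e0h : (2 * (k:ℝ) + β + γ) ≠ 0 := by nlinarith
  have e1h : (1 + 2 * (k:ℝ) + β + γ) ≠ 0 := by nlinarith
  have e2h : (2 + 2 * (k:ℝ) + β + γ) ≠ 0 := by nlinarith
  have cK0 : β + γ + 2 * ((k:ℝ) - 1) + 2 = 2 * (k:ℝ) + β + γ := by ring
  have cK1a : β + γ + 2 * (k:ℝ) + 1 = 1 + 2 * (k:ℝ) + β + γ := by ring
  have cK1b : 2 * (k:ℝ) + β + γ + 1 = 1 + 2 * (k:ℝ) + β + γ := by ring
  have cK2a : β + γ + 2 * (k:ℝ) + 2 = 2 + 2 * (k:ℝ) + β + γ := by ring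
  have cK2b : 2 * (k:ℝ) + β + γ + 2 = 2 + 2 * (k:ℝ) + β + γ := by ring
  have cN : 2 * ((n:ℝ) - 1) + α + β + γ + 3 = 2 * (n:ℝ) + α + β + γ + 1 := by ring
  have key2 : (k:ℝ) * (γ + (k:ℝ)) / ((1 + 2 * (k:ℝ) + β + γ) * (2 * (k:ℝ) + β + γ))
      + (β + γ + (k:ℝ) + 1) * (β + (k:ℝ) + 1)
        / ((1 + 2 * (k:ℝ) + β + γ) * (2 + 2 * (k:ℝ) + β + γ))
      = 1 / 2 * (1 + (β ^ 2 - γ ^ 2) / ((2 + 2 * (k:ℝ) + β + γ) * (2 * (k:ℝ) + β + γ))) := by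
    rw [div_add_div _ _ (mul_ne_zero e1h e0h) (mul_ne_zero e1h e2h), one_add_div (mul_ne_zero e2h e0h),
      ← mul_div_assoc, div_eq_div_iff (by positivity) (by positivity)]
    ring
  have keyN : 1 / ((2 * (n:ℝ) + α + β + γ + 2) * (2 * (n:ℝ) + α + β + γ + 3))
      + 1 / ((2 * (n:ℝ) + α + β + γ + 2) * (2 * (n:ℝ) + α + β + γ + 1))
      = 2 / ((2 * (n:ℝ) + α + β + γ + 1) * (2 * (n:ℝ) + α + β + γ + 3)) := by
    field_simp
    ring
  have pS : ((n:ℝ) - k + α + 1) * ((n:ℝ) - k + 1)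
        / ((2 * (n:ℝ) + α + β + γ + 2) * (2 * (n:ℝ) + α + β + γ + 3))
      + ((n:ℝ) + k + β + γ + 1) * ((n:ℝ) + k + α + β + γ + 1)
        / ((2 * (n:ℝ) + α + β + γ + 2) * (2 * (n:ℝ) + α + β + γ + 1))
      = (2*(n:ℝ)^2 + 2*(n:ℝ)*α + 2*(n:ℝ)*β + 2*(n:ℝ)*γ + 4*(n:ℝ) + 2*(k:ℝ)^2
          + 2*(k:ℝ)*β + 2*(k:ℝ)*γ + 2*(k:ℝ) + α*β + α*γ + 2*α + β^2 + 2*β*γ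
          + 3*β + γ^2 + 3*γ + 2)
        / ((2 * (n:ℝ) + α + β + γ + 1) * (2 * (n:ℝ) + α + β + γ + 3)) := by
    rw [div_add_div _ _ (mul_ne_zero d2 d3) (mul_ne_zero d2 d1), div_eq_div_iff (by positivity) (by positivity)]
    ring
  have pR : ((n:ℝ) + k + α + β + γ + 2) * ((n:ℝ) + k + β + γ + 2)
        / ((2 * (n:ℝ) + α + β + γ + 2) * (2 * (n:ℝ) + α + β + γ + 3))
      + ((n:ℝ) - k) * ((n:ℝ) - k + α)
        / ((2 * (n:ℝ) + α + β + γ + 2) * (2 * (n:ℝ) + α + β + γ + 1))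
      = (2*(n:ℝ)^2 + 2*(n:ℝ)*α + 2*(n:ℝ)*β + 2*(n:ℝ)*γ + 4*(n:ℝ) + 2*(k:ℝ)^2
          + 2*(k:ℝ)*β + 2*(k:ℝ)*γ + 2*(k:ℝ) + α*β + α*γ + 2*α + β^2 + 2*β*γ
          + 3*β + γ^2 + 3*γ + 2)
        / ((2 * (n:ℝ) + α + β + γ + 1) * (2 * (n:ℝ) + α + β + γ + 3)) := by
    rw [div_add_div _ _ (mul_ne_zero d2 d3) (mul_ne_zero d2 d1), div_eq_div_iff (by positivity) (by positivity)]
    ring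
  have hQc : (2*(n:ℝ)^2 + 2*(n:ℝ)*α + 2*(n:ℝ)*β + 2*(n:ℝ)*γ + 4*(n:ℝ) + 2*(k:ℝ)^2
          + 2*(k:ℝ)*β + 2*(k:ℝ)*γ + 2*(k:ℝ) + α*β + α*γ + 2*α + β^2 + 2*β*γ
          + 3*β + γ^2 + 3*γ + 2)
        / ((2 * (n:ℝ) + α + β + γ + 1) * (2 * (n:ℝ) + α + β + γ + 3))
      = 1 + -(((n : ℝ) - k + α + 1) * ((n : ℝ) + k + α + β + γ + 2)
            / ((2 * (n : ℝ) + α + β + γ + 2) * (2 * (n : ℝ) + α + β + γ + 3))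
          + ((n : ℝ) - k) * ((n : ℝ) + k + β + γ + 1)
            / ((2 * (n : ℝ) + α + β + γ + 1) * (2 * (n : ℝ) + α + β + γ + 2))) := by
    field_simp
    ring
  refine ⟨?_, ?_, ?_, ?_, ?_, ?_, ?_, ?_, ?_⟩
  · rw [hs1, hx2, ha1, hkc]
    simp only [cK0, cK1a, cK1b, cK2a, cK2b, cN]
    obtain ⟨vA3, hv3⟩ : ∃ x : ℝ, x = 2 * (n:ℝ) + α + β + γ + 3 := ⟨_, rfl⟩
    obtain ⟨vA2, hv2⟩ : ∃ x : ℝ, x = 2 * (n:ℝ) + α + β + γ + 2 := ⟨_, rfl⟩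
    obtain ⟨vA1, hv1⟩ : ∃ x : ℝ, x = 2 * (n:ℝ) + α + β + γ + 1 := ⟨_, rfl⟩
    obtain ⟨vE2, hw2⟩ : ∃ x : ℝ, x = 2 + 2 * (k:ℝ) + β + γ := ⟨_, rfl⟩
    obtain ⟨vE1, hw1⟩ : ∃ x : ℝ, x = 1 + 2 * (k:ℝ) + β + γ := ⟨_, rfl⟩
    obtain ⟨vE0, hw0⟩ : ∃ x : ℝ, x = 2 * (k:ℝ) + β + γ := ⟨_, rfl⟩
    simp only [← hv3, ← hv2, ← hv1, ← hw2, ← hw1, ← hw0] at key2 keyN pS pR hQc ⊢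
    ring
  · rw [hs1, hx3, hs2, hx2, ha2, hD, ha, hkc]
    simp only [cK0, cK1a, cK1b, cK2a, cK2b, cN]
    obtain ⟨vA3, hv3⟩ : ∃ x : ℝ, x = 2 * (n:ℝ) + α + β + γ + 3 := ⟨_, rfl⟩
    obtain ⟨vA2, hv2⟩ : ∃ x : ℝ, x = 2 * (n:ℝ) + α + β + γ + 2 := ⟨_, rfl⟩
    obtain ⟨vA1, hv1⟩ : ∃ x : ℝ, x = 2 * (n:ℝ) + α + β + γ + 1 := ⟨_, rfl⟩
    obtain ⟨vE2, hw2⟩ : ∃ x : ℝ, x = 2 + 2 * (k:ℝ) + β + γ := ⟨_, rfl⟩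
    obtain ⟨vE1, hw1⟩ : ∃ x : ℝ, x = 1 + 2 * (k:ℝ) + β + γ := ⟨_, rfl⟩
    obtain ⟨vE0, hw0⟩ : ∃ x : ℝ, x = 2 * (k:ℝ) + β + γ := ⟨_, rfl⟩
    simp only [← hv3, ← hv2, ← hv1, ← hw2, ← hw1, ← hw0] at key2 keyN pS pR hQc ⊢
    trans (((n:ℝ) - k + α + 1) * ((n:ℝ) + k + α + β + γ + 2) / (vA2 * vA3)
      * ((k:ℝ) * (γ + (k:ℝ)) / (vE1 * vE0)
        + (β + γ + (k:ℝ) + 1) * (β + (k:ℝ) + 1) / (vE1 * vE2)))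
    · ring
    · rw [key2]; ring
  · rw [hs2, hx3, ha3]
    simp only [cK0, cK1a, cK1b, cK2a, cK2b, cN]
    obtain ⟨vA3, hv3⟩ : ∃ x : ℝ, x = 2 * (n:ℝ) + α + β + γ + 3 := ⟨_, rfl⟩
    obtain ⟨vA2, hv2⟩ : ∃ x : ℝ, x = 2 * (n:ℝ) + α + β + γ + 2 := ⟨_, rfl⟩
    obtain ⟨vA1, hv1⟩ : ∃ x : ℝ, x = 2 * (n:ℝ) + α + β + γ + 1 := ⟨_, rfl⟩
    obtain ⟨vE2, hw2⟩ : ∃ x : ℝ, x = 2 + 2 * (k:ℝ) + β + γ := ⟨_, rfl⟩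
    obtain ⟨vE1, hw1⟩ : ∃ x : ℝ, x = 1 + 2 * (k:ℝ) + β + γ := ⟨_, rfl⟩
    obtain ⟨vE0, hw0⟩ : ∃ x : ℝ, x = 2 * (k:ℝ) + β + γ := ⟨_, rfl⟩
    simp only [← hv3, ← hv2, ← hv1, ← hw2, ← hw1, ← hw0] at key2 keyN pS pR hQc ⊢
    ring
  · rw [hs1, hy2, hr1, hx2, hb1, hkc, hnc]
    simp only [cK0, cK1a, cK1b, cK2a, cK2b, cN]
    obtain ⟨vA3, hv3⟩ : ∃ x : ℝ, x = 2 * (n:ℝ) + α + β + γ + 3 := ⟨_, rfl⟩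
    obtain ⟨vA2, hv2⟩ : ∃ x : ℝ, x = 2 * (n:ℝ) + α + β + γ + 2 := ⟨_, rfl⟩
    obtain ⟨vA1, hv1⟩ : ∃ x : ℝ, x = 2 * (n:ℝ) + α + β + γ + 1 := ⟨_, rfl⟩
    obtain ⟨vE2, hw2⟩ : ∃ x : ℝ, x = 2 + 2 * (k:ℝ) + β + γ := ⟨_, rfl⟩
    obtain ⟨vE1, hw1⟩ : ∃ x : ℝ, x = 1 + 2 * (k:ℝ) + β + γ := ⟨_, rfl⟩
    obtain ⟨vE0, hw0⟩ : ∃ x : ℝ, x = 2 * (k:ℝ) + β + γ := ⟨_, rfl⟩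
    simp only [← hv3, ← hv2, ← hv1, ← hw2, ← hw1, ← hw0] at key2 keyN pS pR hQc ⊢
    trans ((k:ℝ) * ((k:ℝ) + β) * (((n:ℝ) - k + α + 1) * ((n:ℝ) + k + β + γ + 1))
      / (vE1 * vE0) * (1 / (vA2 * vA3) + 1 / (vA2 * vA1)))
    · ring
    · rw [keyN]; ring
  · rw [hs1, hy3, hs2, hy2, hr1, hx3, hr2, hx2, hb2, hD, hb, ha, hc, hkc, hnc]
    simp only [cK0, cK1a, cK1b, cK2a, cK2b, cN]
    obtain ⟨vA3, hv3⟩ : ∃ x : ℝ, x = 2 * (n:ℝ) + α + β + γ + 3 := ⟨_, rfl⟩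
    obtain ⟨vA2, hv2⟩ : ∃ x : ℝ, x = 2 * (n:ℝ) + α + β + γ + 2 := ⟨_, rfl⟩
    obtain ⟨vA1, hv1⟩ : ∃ x : ℝ, x = 2 * (n:ℝ) + α + β + γ + 1 := ⟨_, rfl⟩
    obtain ⟨vE2, hw2⟩ : ∃ x : ℝ, x = 2 + 2 * (k:ℝ) + β + γ := ⟨_, rfl⟩
    obtain ⟨vE1, hw1⟩ : ∃ x : ℝ, x = 1 + 2 * (k:ℝ) + β + γ := ⟨_, rfl⟩
    obtain ⟨vE0, hw0⟩ : ∃ x : ℝ, x = 2 * (k:ℝ) + β + γ := ⟨_, rfl⟩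
    simp only [← hv3, ← hv2, ← hv1, ← hw2, ← hw1, ← hw0] at key2 keyN pS pR hQc ⊢
    trans ((k:ℝ) * (γ + (k:ℝ)) / (vE1 * vE0)
        * (((n:ℝ) - k + α + 1) * ((n:ℝ) - k + 1) / (vA2 * vA3)
          + ((n:ℝ) + k + β + γ + 1) * ((n:ℝ) + k + α + β + γ + 1) / (vA2 * vA1))
      + (β + γ + (k:ℝ) + 1) * (β + (k:ℝ) + 1) / (vE1 * vE2)
        * (((n:ℝ) + k + α + β + γ + 2) * ((n:ℝ) + k + β + γ + 2) / (vA2 * vA3)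
          + ((n:ℝ) - k) * ((n:ℝ) - k + α) / (vA2 * vA1)))
    · ring
    · rw [pS, pR]
      trans (((k:ℝ) * (γ + (k:ℝ)) / (vE1 * vE0)
          + (β + γ + (k:ℝ) + 1) * (β + (k:ℝ) + 1) / (vE1 * vE2))
        * ((2*(n:ℝ)^2 + 2*(n:ℝ)*α + 2*(n:ℝ)*β + 2*(n:ℝ)*γ + 4*(n:ℝ) + 2*(k:ℝ)^2
            + 2*(k:ℝ)*β + 2*(k:ℝ)*γ + 2*(k:ℝ) + α*β + α*γ + 2*α + β^2 + 2*β*γ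
            + 3*β + γ^2 + 3*γ + 2) / (vA1 * vA3)))
      · ring
      · rw [key2, hQc]
  · rw [hs2, hy3, hr2, hx3, hb3, hnc]
    simp only [cK0, cK1a, cK1b, cK2a, cK2b, cN]
    obtain ⟨vA3, hv3⟩ : ∃ x : ℝ, x = 2 * (n:ℝ) + α + β + γ + 3 := ⟨_, rfl⟩
    obtain ⟨vA2, hv2⟩ : ∃ x : ℝ, x = 2 * (n:ℝ) + α + β + γ + 2 := ⟨_, rfl⟩
    obtain ⟨vA1, hv1⟩ : ∃ x : ℝ, x = 2 * (n:ℝ) + α + β + γ + 1 := ⟨_, rfl⟩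
    obtain ⟨vE2, hw2⟩ : ∃ x : ℝ, x = 2 + 2 * (k:ℝ) + β + γ := ⟨_, rfl⟩
    obtain ⟨vE1, hw1⟩ : ∃ x : ℝ, x = 1 + 2 * (k:ℝ) + β + γ := ⟨_, rfl⟩
    obtain ⟨vE0, hw0⟩ : ∃ x : ℝ, x = 2 * (k:ℝ) + β + γ := ⟨_, rfl⟩
    simp only [← hv3, ← hv2, ← hv1, ← hw2, ← hw1, ← hw0] at key2 keyN pS pR hQc ⊢
    trans (((n:ℝ) - k) * ((n:ℝ) + k + α + β + γ + 2)
        * (((k:ℝ) + γ + 1) * ((k:ℝ) + β + γ + 1))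
      / (vE1 * vE2) * (1 / (vA2 * vA3) + 1 / (vA2 * vA1)))
    · ring
    · rw [keyN]; ring
  · rw [hr1, hy2, hc1, hkc, hnc]
    simp only [cK0, cK1a, cK1b, cK2a, cK2b, cN]
    obtain ⟨vA3, hv3⟩ : ∃ x : ℝ, x = 2 * (n:ℝ) + α + β + γ + 3 := ⟨_, rfl⟩
    obtain ⟨vA2, hv2⟩ : ∃ x : ℝ, x = 2 * (n:ℝ) + α + β + γ + 2 := ⟨_, rfl⟩
    obtain ⟨vA1, hv1⟩ : ∃ x : ℝ, x = 2 * (n:ℝ) + α + β + γ + 1 := ⟨_, rfl⟩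
    obtain ⟨vE2, hw2⟩ : ∃ x : ℝ, x = 2 + 2 * (k:ℝ) + β + γ := ⟨_, rfl⟩
    obtain ⟨vE1, hw1⟩ : ∃ x : ℝ, x = 1 + 2 * (k:ℝ) + β + γ := ⟨_, rfl⟩
    obtain ⟨vE0, hw0⟩ : ∃ x : ℝ, x = 2 * (k:ℝ) + β + γ := ⟨_, rfl⟩
    simp only [← hv3, ← hv2, ← hv1, ← hw2, ← hw1, ← hw0] at key2 keyN pS pR hQc ⊢
    ring
  · rw [hr1, hy3, hr2, hy2, hc2, hD, hc, hkc, hnc]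
    simp only [cK0, cK1a, cK1b, cK2a, cK2b, cN]
    obtain ⟨vA3, hv3⟩ : ∃ x : ℝ, x = 2 * (n:ℝ) + α + β + γ + 3 := ⟨_, rfl⟩
    obtain ⟨vA2, hv2⟩ : ∃ x : ℝ, x = 2 * (n:ℝ) + α + β + γ + 2 := ⟨_, rfl⟩
    obtain ⟨vA1, hv1⟩ : ∃ x : ℝ, x = 2 * (n:ℝ) + α + β + γ + 1 := ⟨_, rfl⟩
    obtain ⟨vE2, hw2⟩ : ∃ x : ℝ, x = 2 + 2 * (k:ℝ) + β + γ := ⟨_, rfl⟩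
    obtain ⟨vE1, hw1⟩ : ∃ x : ℝ, x = 1 + 2 * (k:ℝ) + β + γ := ⟨_, rfl⟩
    obtain ⟨vE0, hw0⟩ : ∃ x : ℝ, x = 2 * (k:ℝ) + β + γ := ⟨_, rfl⟩
    simp only [← hv3, ← hv2, ← hv1, ← hw2, ← hw1, ← hw0] at key2 keyN pS pR hQc ⊢
    trans (((n:ℝ) - k) * ((n:ℝ) + k + β + γ + 1) / (vA1 * vA2)
      * ((k:ℝ) * (γ + (k:ℝ)) / (vE1 * vE0)
        + (β + γ + (k:ℝ) + 1) * (β + (k:ℝ) + 1) / (vE1 * vE2)))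
    · ring
    · rw [key2]; ring
  · rw [hr2, hy3, hc3, hnc]
    simp only [cK0, cK1a, cK1b, cK2a, cK2b, cN]
    obtain ⟨vA3, hv3⟩ : ∃ x : ℝ, x = 2 * (n:ℝ) + α + β + γ + 3 := ⟨_, rfl⟩
    obtain ⟨vA2, hv2⟩ : ∃ x : ℝ, x = 2 * (n:ℝ) + α + β + γ + 2 := ⟨_, rfl⟩
    obtain ⟨vA1, hv1⟩ : ∃ x : ℝ, x = 2 * (n:ℝ) + α + β + γ + 1 := ⟨_, rfl⟩
    obtain ⟨vE2, hw2⟩ : ∃ x : ℝ, x = 2 + 2 * (k:ℝ) + β + γ := ⟨_, rfl⟩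
    obtain ⟨vE1, hw1⟩ : ∃ x : ℝ, x = 1 + 2 * (k:ℝ) + β + γ := ⟨_, rfl⟩
    obtain ⟨vE0, hw0⟩ : ∃ x : ℝ, x = 2 * (k:ℝ) + β + γ := ⟨_, rfl⟩
    simp only [← hv3, ← hv2, ← hv1, ← hw2, ← hw1, ← hw0] at key2 keyN pS pR hQc ⊢
    ring
end

section
/- Let α, β, γ be real numbers with α > −1, β > −1, γ > −1. For integers n ≥ 0 and 0 ≤ k ≤ n define x^{(2)}_{n,k} = (n−k+α+1)(β+k+1)/((2n+α+β+γ+3)(β+γ+2k+2)), x^{(3)}_{n,k} = (n+k+α+β+γ+3)(γ+k+1)/((2n+α+β+γ+3)(β+γ+2k+2)), y^{(2)}_{n,k} = (n+k+β+γ+2)(β+k+1)/((2n+α+β+γ+3)(β+γ+2k+2)), y^{(3)}_{n,k} = (n−k)(γ+k+1)/((2n+α+β+γ+3)(β+γ+2k+2)). Then for all n ≥ 0 and 0 ≤ k ≤ n each of these four quantities is nonnegative and x^{(2)}_{n,k} + x^{(3)}_{n,k} + y^{(2)}_{n,k} + y^{(3)}_{n,k} = 1. -/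
/-- The entries in row `(n,k)` of the upper factor `J_U` of the stochastic LU
factorization of the triangle Jacobi matrix are nonnegative and sum to one:
`J_U` is a stochastic matrix. -/
theorem stmt_17 (α β γ : ℝ) (hα : -1 < α) (hβ : -1 < β) (hγ : -1 < γ)
    (x2 x3 y2 y3 : ℕ → ℕ → ℝ)
    (hx2 : ∀ n k, x2 n k = ((n : ℝ) - k + α + 1) * (β + (k : ℝ) + 1)
      / ((2 * (n : ℝ) + α + β + γ + 3) * (β + γ + 2 * (k : ℝ) + 2)))
    (hx3 : ∀ n k, x3 n k = ((n : ℝ) + k + α + β + γ + 3) * (γ + (k : ℝ) + 1)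
      / ((2 * (n : ℝ) + α + β + γ + 3) * (β + γ + 2 * (k : ℝ) + 2)))
    (hy2 : ∀ n k, y2 n k = ((n : ℝ) + k + β + γ + 2) * (β + (k : ℝ) + 1)
      / ((2 * (n : ℝ) + α + β + γ + 3) * (β + γ + 2 * (k : ℝ) + 2)))
    (hy3 : ∀ n k, y3 n k = ((n : ℝ) - k) * (γ + (k : ℝ) + 1)
      / ((2 * (n : ℝ) + α + β + γ + 3) * (β + γ + 2 * (k : ℝ) + 2))) :
    ∀ n k : ℕ, k ≤ n →
      0 ≤ x2 n k ∧ 0 ≤ x3 n k ∧ 0 ≤ y2 n k ∧ 0 ≤ y3 n k ∧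
      x2 n k + x3 n k + y2 n k + y3 n k = 1 := by
  intro n k hk
  have hkn : (k:ℝ) ≤ n := by exact_mod_cast hk
  have hn0 : (0:ℝ) ≤ n := Nat.cast_nonneg n
  have hk0 : (0:ℝ) ≤ k := Nat.cast_nonneg k
  have hd1 : (0:ℝ) < 2 * (n:ℝ) + α + β + γ + 3 := by linarith
  have hd2 : (0:ℝ) < β + γ + 2 * (k:ℝ) + 2 := by linarith
  have hd : (0:ℝ) < (2 * (n:ℝ) + α + β + γ + 3) * (β + γ + 2 * (k:ℝ) + 2) :=
    mul_pos hd1 hd2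
  refine ⟨?_, ?_, ?_, ?_, ?_⟩
  · rw [hx2]; exact div_nonneg (mul_nonneg (by linarith) (by linarith)) hd.le
  · rw [hx3]; exact div_nonneg (mul_nonneg (by linarith) (by linarith)) hd.le
  · rw [hy2]; exact div_nonneg (mul_nonneg (by linarith) (by linarith)) hd.le
  · rw [hy3]; exact div_nonneg (mul_nonneg (by linarith) (by linarith)) hd.le
  · rw [hx2, hx3, hy2, hy3]
    rw [← add_div, ← add_div, ← add_div, div_eq_one_iff_eq hd.ne']
    ring
end

section
/- Let α, β, γ be real numbers with α > −1, β ≥ γ ≥ 0, β + γ > 0 and α² ≤ (β+γ+1)², and let τ be a real number with −1/2 ≤ τ ≤ 1/2. For integers n ≥ 1 and 0 ≤ k ≤ n define a_{n,k} = (n−k+α+1)(n+k+α+β+γ+2)/((2n+α+β+γ+2)(2n+α+β+γ+3)), c_{n,k} = (n−k)(n+k+β+γ+1)/((2n+α+β+γ+1)(2n+α+β+γ+2)), D_k = (1/2)(1 + (β²−γ²)/((2k+β+γ+2)(2k+β+γ))), a^{(2)}_{n,k} = D_k·a_{n,k}, c^{(2)}_{n,k} = D_k·c_{n,k}, and b^{(2)}_{n,k}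 = D_k·(1 − a_{n,k} − c_{n,k}). Then for all n ≥ 1 and 0 ≤ k ≤ n: τ·a_{n,k} + a^{(2)}_{n,k} ≥ 0, τ·c_{n,k} + c^{(2)}_{n,k} ≥ 0, and b^{(2)}_{n,k} − τ·(a_{n,k} + c_{n,k}) ≥ 0. -/
set_option maxHeartbeats 2000000 in
/-- Nonnegativity of the possibly-negative entries of `τJ₁ + J₂` for the triangle
polynomials normalized at `(0,1)`, in the regime `β ≥ γ ≥ 0`, `β + γ > 0`,
`α² ≤ (β+γ+1)²`, and `−1/2 ≤ τ ≤ 1/2`. -/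
theorem stmt_19 (α β γ τ : ℝ) (hα : -1 < α) (hβγ' : γ ≤ β) (hγ : 0 ≤ γ)
    (hβγ : 0 < β + γ) (hreg : α ^ 2 ≤ (β + γ + 1) ^ 2)
    (hτ1 : -(1 / 2 : ℝ) ≤ τ) (hτ2 : τ ≤ 1 / 2)
    (a c D a2 c2 b2 : ℕ → ℕ → ℝ)
    (ha : ∀ n k, a n k = ((n : ℝ) - k + α + 1) * ((n : ℝ) + k + α + β + γ + 2)
      / ((2 * (n : ℝ) + α + β + γ + 2) * (2 * (n : ℝ) + α + β + γ + 3)))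
    (hc : ∀ n k, c n k = ((n : ℝ) - k) * ((n : ℝ) + k + β + γ + 1)
      / ((2 * (n : ℝ) + α + β + γ + 1) * (2 * (n : ℝ) + α + β + γ + 2)))
    (hD : ∀ n k, D n k = (1 / 2) * (1 + (β ^ 2 - γ ^ 2)
      / ((2 * (k : ℝ) + β + γ + 2) * (2 * (k : ℝ) + β + γ))))
    (ha2 : ∀ n k, a2 n k = D n k * a n k)
    (hc2 : ∀ n k, c2 n k = D n k * c n k)
    (hb2 : ∀ n k, b2 n k = D n k * (1 - a n k - c n k)) :
    ∀ n k : ℕ, 1 ≤ n → k ≤ n →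
      0 ≤ τ * a n k + a2 n k ∧
      0 ≤ τ * c n k + c2 n k ∧
      0 ≤ b2 n k - τ * (a n k + c n k) := by
  intro n k hn hk
  have hN : (1 : ℝ) ≤ (n : ℝ) := by exact_mod_cast hn
  have hK0 : (0 : ℝ) ≤ (k : ℝ) := Nat.cast_nonneg k
  have hKN : (k : ℝ) ≤ (n : ℝ) := by exact_mod_cast hk
  set N : ℝ := (n : ℝ)
  set K : ℝ := (k : ℝ)
  -- α ≤ β + γ + 1
  have hαup : α ≤ β + γ + 1 := by nlinarith
  -- positivity of denominators
  have hd1 : 0 < 2 * N + α + β + γ + 1 := by linarith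
  have hd2 : 0 < 2 * N + α + β + γ + 2 := by linarith
  have hd3 : 0 < 2 * N + α + β + γ + 3 := by linarith
  have he1 : 0 < 2 * K + β + γ := by linarith
  have he2 : 0 < 2 * K + β + γ + 2 := by linarith
  -- a ≥ 0, c ≥ 0
  have ha0 : 0 ≤ a n k := by
    rw [ha]
    apply div_nonneg (by nlinarith) (by nlinarith)
  have hc0 : 0 ≤ c n k := by
    rw [hc]
    apply div_nonneg (by nlinarith) (by nlinarith)
  -- 1/2 ≤ D ≤ 1
  have hDlow : 1 / 2 ≤ D n k := by
    rw [hD]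
    have : 0 ≤ (β ^ 2 - γ ^ 2) / ((2 * K + β + γ + 2) * (2 * K + β + γ)) :=
      div_nonneg (by nlinarith) (by positivity)
    linarith
  have hDhigh : D n k ≤ 1 := by
    rw [hD]
    have : (β ^ 2 - γ ^ 2) / ((2 * K + β + γ + 2) * (2 * K + β + γ)) ≤ 1 := by
      rw [div_le_one (by positivity)]
      nlinarith
    linarith
  -- key: a + c ≤ 1/2
  have hac : a n k + c n k ≤ 1 / 2 := by
    have t1 : 0 ≤ (β + γ + 1 - α) * (α + β + γ + 1) * (α + β + γ + 2) := by
      apply mul_nonneg (mul_nonneg (by linarith) (by linarith)) (by linarith)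
    have t2 : 0 ≤ K * ((1 + β + γ) * (α + β + γ + 2)) := by
      apply mul_nonneg hK0 (mul_nonneg (by linarith) (by linarith))
    have t3 : 0 ≤ K * K * (α + β + γ + 2) :=
      mul_nonneg (mul_nonneg hK0 hK0) (by linarith)
    have t4 : 0 ≤ N * ((β + γ + 1) ^ 2 - α ^ 2) :=
      mul_nonneg (by linarith) (by linarith)
    have t5 : 0 ≤ N * K * (1 + β + γ) :=
      mul_nonneg (mul_nonneg (by linarith) hK0) (by linarith)
    have t6 : 0 ≤ N * (K * K) :=
      mul_nonneg (by linarith) (mul_nonneg hK0 hK0)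
    have key : 2 * ((N - K + α + 1) * (N + K + α + β + γ + 2) * (2 * N + α + β + γ + 1)
        + (N - K) * (N + K + β + γ + 1) * (2 * N + α + β + γ + 3))
        ≤ (2 * N + α + β + γ + 1) * (2 * N + α + β + γ + 2) * (2 * N + α + β + γ + 3) := by
      nlinarith [t1, t2, t3, t4, t5, t6]
    have hsum : a n k + c n k = ((N - K + α + 1) * (N + K + α + β + γ + 2)
          * (2 * N + α + β + γ + 1)
        + (N - K) * (N + K + β + γ + 1) * (2 * N + α + β + γ + 3))
        / ((2 * N + α + β + γ + 1) * (2 * N + α + β + γ + 2) * (2 * N + α + β + γ + 3)) := by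
      rw [ha, hc, div_add_div _ _ (mul_pos hd2 hd3).ne' (mul_pos hd1 hd2).ne',
        div_eq_div_iff (mul_pos (mul_pos hd2 hd3) (mul_pos hd1 hd2)).ne'
          (mul_pos (mul_pos hd1 hd2) hd3).ne']
      ring
    rw [hsum, div_le_iff₀ (by positivity)]
    linarith [key]
  refine ⟨?_, ?_, ?_⟩
  · rw [ha2]
    nlinarith [mul_nonneg (show (0:ℝ) ≤ τ + D n k by linarith) ha0]
  · rw [hc2]
    nlinarith [mul_nonneg (show (0:ℝ) ≤ τ + D n k by linarith) hc0]
  · rw [hb2]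
    have k1 : 0 ≤ (D n k - 1 / 2) * (1 - a n k - c n k) :=
      mul_nonneg (by linarith) (by linarith)
    have k2 : 0 ≤ (1 / 2 - τ) * (a n k + c n k) :=
      mul_nonneg (by linarith) (by linarith)
    nlinarith [k1, k2]
end
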